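/- For every natural number t, v_2(S(32t + 12, 5)) = 3 and v_2(S(32t + 15, 5)) = 3. -/

import Mathlib

/-- Stirling numbers of the second kind, via the recurrence
`S(n+1,k+1) = S(n,k) + (k+1) * S(n,k+1)`. -/
def stirling2 : ℕ → ℕ → ℕ
  | 0, 0 => 1
  | 0, _ + 1 => 0
  | _ + 1, 0 => 0
  | n + 1, k + 1 => stirling2 n k + (k + 1) * stirling2 n (k + 1)

def V (n : ℕ) : List ℕ :=
  [stirling2 n 0 % 16, stirling2 n 1 % 16, stirling2 n 2 % 16,
   stirling2 n 3 % 16, stirling2 n 4 % 16, stirling2 n 5 % 16]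

def f : List ℕ → List ℕ
  | [a0, a1, a2, a3, a4, a5] =>
      [0, (a0 + 1 * a1) % 16, (a1 + 2 * a2) % 16, (a2 + 3 * a3) % 16,
       (a3 + 4 * a4) % 16, (a4 + 5 * a5) % 16]
  | l => l

lemma Vstep (n : ℕ) : V (n + 1) = f (V n) := by
  simp only [V, f, stirling2, List.cons.injEq]
  norm_num
  omega

lemma Viter (n m : ℕ) : V (n + m) = f^[m] (V n) := by
  induction m with
  | zero => rfl
  | succ m ih =>
    rw [← Nat.add_assoc, Vstep, ih, Function.iterate_succ_apply']

lemma V0 : V 0 = [1, 0, 0, 0, 0, 0] := rfl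

lemma Vmain (t : ℕ) : V (32 * t + 12) = [0, 1, 15, 14, 13, 8] := by
  induction t with
  | zero =>
    have := Viter 0 12
    rw [V0] at this
    rw [this]; decide
  | succ t ih =>
    have h : 32 * (t + 1) + 12 = (32 * t + 12) + 32 := by ring
    rw [h, Viter, ih]
    decide

lemma val3 (x : ℕ) (h : x % 16 = 8) : padicValNat 2 x = 3 := by
  haveI : Fact (Nat.Prime 2) := ⟨Nat.prime_two⟩
  have hx : x ≠ 0 := by omega
  have h8 : (2 : ℕ) ^ 3 ∣ x := by omega
  have h16 : ¬ (2 : ℕ) ^ 4 ∣ x := by omega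
  have h1 : 3 ≤ padicValNat 2 x := (padicValNat_dvd_iff_le hx).mp h8
  have h2 : ¬ 4 ≤ padicValNat 2 x := fun hh => h16 ((padicValNat_dvd_iff_le hx).mpr hh)
  omega

theorem stmt_5 (t : ℕ) :
    padicValNat 2 (stirling2 (32 * t + 12) 5) = 3 ∧
    padicValNat 2 (stirling2 (32 * t + 15) 5) = 3 := by
  have h12 := Vmain t
  have h15 : V (32 * t + 15) = [0, 1, 15, 13, 14, 8] := by
    have h : 32 * t + 15 = (32 * t + 12) + 3 := by ring
    rw [h, Viter, h12]
    decide
  simp only [V, List.cons.injEq] at h12 h15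
  exact ⟨val3 _ h12.2.2.2.2.2.1, val3 _ h15.2.2.2.2.2.1⟩
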